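/- For the map μ(a, b) = (a₀b₀, a₁b₀, a₂b₀ + a₀b₁, a₁b₁, a₂b₁), if v = μ(a,b) with v₁ ≠ 0 and v₃ ≠ 0, then (a, b) is uniquely determined up to scaling: there exists λ ≠ 0 with a = λ·(v₀/v₁, 1, v₄/v₃) and b = (1/λ)·(v₁, v₃). -/
import Mathlib

/-- The 2-layer convolution parametrization map with filter sizes (3,2) and strides (2,1). -/
def conv21 (a : Fin 3 → ℝ) (b : Fin 2 → ℝ) : Fin 5 → ℝ :=
  ![a 0 * b 0, a 1 * b 0, a 2 * b 0 + a 0 * b 1, a 1 * b 1, a 2 * b 1]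

/-- If v = μ(a,b) with v₁ ≠ 0 and v₃ ≠ 0, then (a,b) is determined up to
scaling: a = λ·(v₀/v₁, 1, v₄/v₃) and b = (1/λ)·(v₁, v₃) for some λ ≠ 0. -/
theorem stmt_7 (a : Fin 3 → ℝ) (b : Fin 2 → ℝ) (v : Fin 5 → ℝ) (hv : v = conv21 a b)
    (h1 : v 1 ≠ 0) (h3 : v 3 ≠ 0) :
    ∃ l : ℝ, l ≠ 0 ∧ a = l • ![v 0 / v 1, 1, v 4 / v 3] ∧ b = l⁻¹ • ![v 1, v 3] := by
  subst hv
  simp only [conv21, Matrix.cons_val_one, Matrix.cons_val_zero, Matrix.cons_val_fin_one,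
    Matrix.head_cons] at *
  have ha1 : a 1 ≠ 0 := fun h => h1 (by simp [conv21, h])
  have hb0 : b 0 ≠ 0 := fun h => h1 (by simp [conv21, h])
  have hb1 : b 1 ≠ 0 := fun h => h3 (by simp [conv21, h])
  refine ⟨a 1, ha1, ?_, ?_⟩ <;> funext i <;> fin_cases i <;>
    simp [conv21] <;> field_simp <;> ring
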